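/- For integers n ≥ 3 and t ≥ 1, the geodesic distance (Wiener index) of the Cayley tree C(t,n) equals n(n−1)^{t−1} + (n(t−1)(n−1)^{t+1} − n(n−1)^{t−1} + n)/(n−2)² + (n((n−2)t − n)(n−1)^{2t} + 2n(n−1)^{t+1})/(n−2)³ + (n(n−1)/(n−2)³)·(((n−2)t − 1)(n−1)^{2t} − ((n−2)t − 2)(n−1)^t − 1). -/

import Mathlib

/-- The geodesic distance (Wiener index) of a finite simple graph: the sum of the graph
distances over all unordered pairs of distinct vertices. -/
noncomputable def wienerIndex {V : Type} [Finite V] (G : SimpleGraph V) : ℕ :=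
  letI := Fintype.ofFinite V
  (∑ u : V, ∑ v : V, G.dist u v) / 2

/-- The vertex set of the Cayley tree `C(t,n)`: the root together with all pairs `(i, l)`
where `i ∈ Fin n` records the branch emanating from the root and `l` is a word over
`Fin (n-1)` of length at most `t-1` recording the path within that branch. -/
def CayleyVertex (n t : ℕ) : Type :=
  Unit ⊕ (Fin n × {l : List (Fin (n - 1)) // l.length ≤ t - 1})

instance (k j : ℕ) : Finite {l : List (Fin k) // l.length ≤ j} :=
  (List.finite_length_le (Fin k) j).to_subtype

instance (n t : ℕ) : Finite (CayleyVertex n t) := by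
  unfold CayleyVertex; infer_instance

/-- The Cayley tree `C(t,n)`: the root is adjacent to the first vertex `(i, [])` of each
of the `n` branches, and within a branch adjacency is given by extension by one letter. -/
def cayleyTree (n t : ℕ) : SimpleGraph (CayleyVertex n t) :=
  SimpleGraph.fromRel fun a b =>
    match a, b with
    | Sum.inl _, Sum.inr (_, l) => l.1 = []
    | Sum.inr (i, l), Sum.inr (i', l') => i = i' ∧ ∃ a : Fin (n - 1), l'.1 = a :: l.1
    | _, _ => False


namespace CayleyAux
variable {α : Type*} [DecidableEq α]

/-- length of longest common prefix -/
def lcp : List α → List α → ℕ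
  | a :: r, b :: r' => if a = b then lcp r r' + 1 else 0
  | _, _ => 0

@[simp] lemma lcp_nil_left (r : List α) : lcp [] r = 0 := by cases r <;> rfl
@[simp] lemma lcp_nil_right (r : List α) : lcp r [] = 0 := by cases r <;> rfl

lemma lcp_comm (r r' : List α) : lcp r r' = lcp r' r := by
  induction r generalizing r' with
  | nil => simp
  | cons a s ih =>
    cases r' with
    | nil => simp
    | cons b s' =>
      by_cases h : a = b
      · subst h; simp [lcp, ih]
      · simp [lcp, h, Ne.symm h]

lemma lcp_le_left (r r' : List α) : lcp r r' ≤ r.length := by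
  induction r generalizing r' with
  | nil => simp
  | cons a s ih =>
    cases r' with
    | nil => simp
    | cons b s' =>
      by_cases h : a = b <;> simp [lcp, h]
      exact ih s'

lemma lcp_le_right (r r' : List α) : lcp r r' ≤ r'.length := by
  rw [lcp_comm]; exact lcp_le_left r' r

@[simp] lemma lcp_self (r : List α) : lcp r r = r.length := by
  induction r with
  | nil => simp
  | cons a s ih => simp [lcp, ih]

lemma take_lcp_eq (r r' : List α) : r.take (lcp r r') = r'.take (lcp r r') := by
  induction r generalizing r' with
  | nil => simp
  | cons a s ih =>
    cases r' with
    | nil => simp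
    | cons b s' =>
      by_cases h : a = b
      · subst h; simp [lcp, ih]
      · simp [lcp, h]

lemma lcp_append_singleton_le (r r' : List α) (a : α) :
    lcp (r ++ [a]) r' ≤ lcp r r' + 1 := by
  induction r generalizing r' with
  | nil =>
    simpa using le_trans (lcp_le_left _ _) (by simp)
  | cons b s ih =>
    cases r' with
    | nil => simp
    | cons c s' =>
      by_cases h : b = c <;> simp [lcp, h]
      exact ih s'

lemma le_lcp_append_singleton (r r' : List α) (a : α) :
    lcp r r' ≤ lcp (r ++ [a]) r' := by
  induction r generalizing r' with
  | nil => simp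
  | cons b s ih =>
    cases r' with
    | nil => simp
    | cons c s' =>
      by_cases h : b = c <;> simp [lcp, h]
      exact ih s'

/-- length of longest common suffix -/
def csuf (l l' : List α) : ℕ := lcp l.reverse l'.reverse

lemma csuf_comm (l l' : List α) : csuf l l' = csuf l' l := lcp_comm _ _
lemma csuf_le_left (l l' : List α) : csuf l l' ≤ l.length := by
  simpa [csuf] using lcp_le_left l.reverse l'.reverse
lemma csuf_le_right (l l' : List α) : csuf l l' ≤ l'.length := by
  simpa [csuf] using lcp_le_right l.reverse l'.reverse
lemma csuf_self (l : List α) : csuf l l = l.length := by simp [csuf, lcp_self]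
lemma csuf_nil_left (l : List α) : csuf [] l = 0 := by simp [csuf, lcp_nil_left]

lemma csuf_cons_le (a : α) (l l' : List α) : csuf (a :: l) l' ≤ csuf l l' + 1 := by
  simpa [csuf] using lcp_append_singleton_le l.reverse l'.reverse a
lemma le_csuf_cons (a : α) (l l' : List α) : csuf l l' ≤ csuf (a :: l) l' := by
  simpa [csuf] using le_lcp_append_singleton l.reverse l'.reverse a

/-- the common suffix itself -/
lemma drop_csuf_suffix_right (l l' : List α) :
    l.drop (l.length - csuf l l') <:+ l' := by
  have h1 : (l.reverse.take (csuf l l')).reverse = l.drop (l.length - csuf l l') := by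
    rw [List.reverse_take]; simp
  have h2 : (l'.reverse.take (csuf l l')).reverse = l'.drop (l'.length - csuf l l') := by
    rw [List.reverse_take]; simp
  have := take_lcp_eq l.reverse l'.reverse
  rw [← h1, show lcp l.reverse l'.reverse = csuf l l' from rfl] at *
  rw [this, h2]
  exact List.drop_suffix _ _

/-- tree distance between two words, where the parent of `a :: l` is `l` -/
def wdist (l l' : List α) : ℕ := (l.length - csuf l l') + (l'.length - csuf l l')

lemma wdist_comm (l l' : List α) : wdist l l' = wdist l' l := by
  unfold wdist; rw [csuf_comm]; omega
lemma wdist_self (l : List α) : wdist l l = 0 := by simp [wdist, csuf_self]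
lemma wdist_nil_left (l : List α) : wdist [] l = l.length := by
  simp [wdist, csuf_nil_left]

lemma wdist_cons_le (a : α) (l l' : List α) : wdist (a :: l) l' ≤ wdist l l' + 1 := by
  have h1 := csuf_cons_le a l l'
  have h2 := le_csuf_cons a l l'
  have h3 := csuf_le_left l l'
  have h4 := csuf_le_right l l'
  have h5 := csuf_le_right (a :: l) l'
  unfold wdist
  simp only [List.length_cons] at *
  omega

lemma le_wdist_cons (a : α) (l l' : List α) : wdist l l' ≤ wdist (a :: l) l' + 1 := by
  have h1 := csuf_cons_le a l l'
  have h2 := le_csuf_cons a l l'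
  have h3 := csuf_le_left l l'
  have h4 := csuf_le_right l l'
  have h5 := csuf_le_left (a :: l) l'
  unfold wdist
  simp only [List.length_cons] at *
  omega

end CayleyAux

namespace CayleyAux
variable {n t : ℕ}

/-- the explicit distance function -/
def dd : (Unit ⊕ (Fin n × {l : List (Fin (n - 1)) // l.length ≤ t - 1})) →
    (Unit ⊕ (Fin n × {l : List (Fin (n - 1)) // l.length ≤ t - 1})) → ℕ
  | Sum.inl _, Sum.inl _ => 0
  | Sum.inl _, Sum.inr (_, l) => 1 + l.1.length
  | Sum.inr (_, l), Sum.inl _ => 1 + l.1.length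
  | Sum.inr (i, l), Sum.inr (j, s) =>
      if i = j then wdist l.1 s.1 else (1 + l.1.length) + (1 + s.1.length)

lemma dd_self (u : CayleyVertex n t) : dd u u = 0 := by
  rcases u with u | ⟨i, l⟩
  · rfl
  · simp [dd, wdist_self]

lemma adj_root (i : Fin n) (l : {l : List (Fin (n - 1)) // l.length ≤ t - 1})
    (h : l.1 = []) : (cayleyTree n t).Adj (Sum.inl ()) (Sum.inr (i, l)) := by
  refine (SimpleGraph.fromRel_adj ..).mpr ?_
  exact ⟨Sum.inl_ne_inr, Or.inl h⟩

lemma adj_cons (i : Fin n) (l s : {l : List (Fin (n - 1)) // l.length ≤ t - 1})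
    (a : Fin (n - 1)) (h : s.1 = a :: l.1) :
    (cayleyTree n t).Adj (Sum.inr (i, l)) (Sum.inr (i, s)) := by
  refine (SimpleGraph.fromRel_adj ..).mpr ?_
  refine ⟨?_, Or.inl ⟨rfl, a, h⟩⟩
  intro hc
  have : l.1 = s.1 := by
    have := congrArg (fun x : CayleyVertex n t =>
      match x with | Sum.inr (_, l) => l.1 | Sum.inl _ => []) hc
    simpa using this
  rw [h] at this
  exact List.cons_ne_self a l.1 (by rw [← this])

/-- walk from a word up to one of its suffixes -/
lemma exists_walk_up (i : Fin n) :
    ∀ (lst : List (Fin (n - 1))) (hl : lst.length ≤ t - 1)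
      (s : List (Fin (n - 1))) (hs : s.length ≤ t - 1), s <:+ lst →
      ∃ p : (cayleyTree n t).Walk (Sum.inr (i, ⟨lst, hl⟩)) (Sum.inr (i, ⟨s, hs⟩)),
        p.length = lst.length - s.length := by
  intro lst
  induction lst with
  | nil =>
    intro hl s hs h
    rw [List.suffix_nil] at h
    subst h
    exact ⟨SimpleGraph.Walk.nil, rfl⟩
  | cons a l2 ih =>
    intro hl s hs h
    rcases List.suffix_cons_iff.mp h with h | h
    · subst h
      exact ⟨SimpleGraph.Walk.nil, by simp; rfl⟩
    · have hl2 : l2.length ≤ t - 1 := by simp at hl; omega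
      obtain ⟨p, hp⟩ := ih hl2 s hs h
      refine ⟨SimpleGraph.Walk.cons ((adj_cons i ⟨l2, hl2⟩ ⟨a :: l2, hl⟩ a rfl).symm) p, ?_⟩
      have := h.length_le
      show p.length + 1 = (a :: l2).length - s.length
      rw [hp, List.length_cons]
      omega

lemma exists_walk_from_root (i : Fin n) (l : {l : List (Fin (n - 1)) // l.length ≤ t - 1}) :
    ∃ p : (cayleyTree n t).Walk (Sum.inl ()) (Sum.inr (i, l)),
      p.length = 1 + l.1.length := by
  have h0 : ([] : List (Fin (n - 1))).length ≤ t - 1 := by simp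
  obtain ⟨p, hp⟩ := exists_walk_up i l.1 l.2 [] h0 List.nil_suffix
  refine ⟨SimpleGraph.Walk.cons (adj_root i ⟨[], h0⟩ rfl) p.reverse, ?_⟩
  have h2 : p.reverse.length = l.1.length :=
    (SimpleGraph.Walk.length_reverse p).trans (hp.trans (by simp))
  show p.reverse.length + 1 = 1 + l.1.length
  omega

lemma exists_walk_dd (u v : CayleyVertex n t) :
    ∃ p : (cayleyTree n t).Walk u v, p.length = dd u v := by
  rcases u with u | ⟨i, l⟩ <;> rcases v with v | ⟨j, s⟩
  · exact ⟨SimpleGraph.Walk.nil, rfl⟩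
  · exact exists_walk_from_root j s
  · obtain ⟨p, hp⟩ := exists_walk_from_root i l
    exact ⟨p.reverse, by have := SimpleGraph.Walk.length_reverse p; simp [dd]; omega⟩
  · by_cases hij : i = j
    · subst hij
      set c := csuf l.1 s.1 with hc
      have hcl := csuf_le_left l.1 s.1
      have hcs := csuf_le_right l.1 s.1
      set g := l.1.drop (l.1.length - c) with hg
      have hgl : g <:+ l.1 := List.drop_suffix _ _
      have hgs : g <:+ s.1 := drop_csuf_suffix_right l.1 s.1
      have hglen : g.length = c := by rw [hg, List.length_drop]; omega
      have hgle : g.length ≤ t - 1 := le_trans hgl.length_le l.2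
      obtain ⟨p, hp⟩ := exists_walk_up i l.1 l.2 g hgle hgl
      obtain ⟨q, hq⟩ := exists_walk_up i s.1 s.2 g hgle hgs
      refine ⟨p.append q.reverse, ?_⟩
      simp [hp, hq, dd, wdist, hglen]
      have h1 := SimpleGraph.Walk.length_append p q.reverse
      have h2 := SimpleGraph.Walk.length_reverse q
      omega
    · obtain ⟨p, hp⟩ := exists_walk_from_root i l
      obtain ⟨q, hq⟩ := exists_walk_from_root j s
      refine ⟨p.reverse.append q, ?_⟩
      simp [hp, hq, dd, hij]
      have h1 := SimpleGraph.Walk.length_append p.reverse q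
      have h2 := SimpleGraph.Walk.length_reverse p
      omega

lemma dd_lipschitz (u v w : CayleyVertex n t) (h : (cayleyTree n t).Adj u w) :
    dd u v ≤ dd w v + 1 := by
  rw [cayleyTree, SimpleGraph.fromRel_adj] at h
  obtain ⟨hne, hrel⟩ := h
  rcases u with u | ⟨i, l⟩ <;> rcases w with w | ⟨i', l'⟩
  · exact hrel.elim (fun h => h.elim) (fun h => h.elim)
  · -- root to (i', l'); rel gives l'.1 = []
    have hl' : l'.1 = [] := by
      rcases hrel with h | h
      · exact h
      · exact absurd h (by simp)
    rcases v with v | ⟨j, s⟩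
    · simp [dd, hl']
    · simp only [dd]
      by_cases hj : i' = j <;> simp [hj, hl', wdist_nil_left, csuf_comm]
      · omega
      · omega
  · have hl : l.1 = [] := by
      rcases hrel with h | h
      · exact absurd h (by simp)
      · exact h
    rcases v with v | ⟨j, s⟩
    · simp [dd, hl]
    · simp only [dd]
      by_cases hj : i = j <;> simp [hj, hl, wdist_nil_left]
      · omega
      · omega
  · -- both inr
    have key : i = i' ∧ ((∃ a, l'.1 = a :: l.1) ∨ (∃ a, l.1 = a :: l'.1)) := by
      rcases hrel with ⟨h1, a, h2⟩ | ⟨h1, a, h2⟩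
      · exact ⟨h1, Or.inl ⟨a, h2⟩⟩
      · exact ⟨h1.symm, Or.inr ⟨a, h2⟩⟩
    obtain ⟨rfl, hcase⟩ := key
    rcases v with v | ⟨j, s⟩
    · rcases hcase with ⟨a, h⟩ | ⟨a, h⟩ <;>
        · simp only [dd]
          have := congrArg List.length h
          simp at this
          omega
    · simp only [dd]
      by_cases hj : i = j <;> simp only [hj, if_true, if_false]
      · rcases hcase with ⟨a, h⟩ | ⟨a, h⟩
        · rw [h]; exact le_wdist_cons a l.1 s.1
        · rw [h]; exact wdist_cons_le a l'.1 s.1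
      · rcases hcase with ⟨a, h⟩ | ⟨a, h⟩ <;>
          · have := congrArg List.length h
            simp at this
            omega

lemma dist_eq_dd (u v : CayleyVertex n t) : (cayleyTree n t).dist u v = dd u v := by
  apply le_antisymm
  · obtain ⟨p, hp⟩ := exists_walk_dd u v
    calc (cayleyTree n t).dist u v ≤ p.length := SimpleGraph.dist_le p
      _ = dd u v := hp
  · have key : ∀ (p : (cayleyTree n t).Walk u v), dd u v ≤ p.length := by
      intro p
      induction p with
      | nil => simp [dd_self]
      | @cons a b c hadj q ih =>
        calc dd a c ≤ dd b c + 1 := dd_lipschitz a c b hadj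
          _ ≤ q.length + 1 := by omega
    obtain ⟨p0, _⟩ := exists_walk_dd u v
    obtain ⟨p, hp⟩ := SimpleGraph.Reachable.exists_walk_length_eq_dist ⟨p0⟩
    calc dd u v ≤ p.length := key p
      _ = (cayleyTree n t).dist u v := hp

end CayleyAux

namespace CayleyAux
variable {α : Type*} [DecidableEq α] [Fintype α]

/-- words of length at most m -/
def SW (α : Type*) [DecidableEq α] [Fintype α] : ℕ → Finset (List α)
  | 0 => {[]}
  | m + 1 => insert [] ((Finset.univ ×ˢ SW α m).image fun p => p.1 :: p.2)

lemma mem_SW (m : ℕ) (l : List α) : l ∈ SW α m ↔ l.length ≤ m := by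
  induction m generalizing l with
  | zero => simp [SW, List.length_eq_zero_iff]
  | succ m ih =>
    cases l with
    | nil => simp [SW]
    | cons a l2 =>
      simp only [SW, Finset.mem_insert, Finset.mem_image, Finset.mem_product]
      constructor
      · rintro (h | ⟨⟨b, l3⟩, ⟨-, h3⟩, h⟩)
        · exact absurd h (List.cons_ne_nil a l2)
        · simp only [List.cons.injEq] at h
          obtain ⟨rfl, rfl⟩ := h
          simpa using Nat.succ_le_succ ((ih _).mp h3)
      · intro h
        refine Or.inr ⟨(a, l2), ⟨Finset.mem_univ _, (ih l2).mpr ?_⟩, rfl⟩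
        simpa using Nat.le_of_succ_le_succ h

lemma sum_SW_succ {M : Type*} [AddCommMonoid M] (m : ℕ) (f : List α → M) :
    ∑ l ∈ SW α (m + 1), f l = f [] + ∑ a : α, ∑ l ∈ SW α m, f (a :: l) := by
  show ∑ l ∈ insert [] ((Finset.univ ×ˢ SW α m).image fun p => p.1 :: p.2), f l = _
  rw [Finset.sum_insert (by simp)]
  congr 1
  rw [Finset.sum_image (by rintro ⟨a, l⟩ - ⟨b, s⟩ - h; simpa [Prod.ext_iff] using h)]
  rw [← Finset.sum_product']

def Pn (α : Type*) [DecidableEq α] [Fintype α] (m : ℕ) : ℕ := (SW α m).card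
def Ln (α : Type*) [DecidableEq α] [Fintype α] (m : ℕ) : ℕ := ∑ l ∈ SW α m, l.length
def Cn (α : Type*) [DecidableEq α] [Fintype α] (m : ℕ) : ℕ :=
  ∑ l ∈ SW α m, ∑ l' ∈ SW α m, lcp l l'
def Fn (α : Type*) [DecidableEq α] [Fintype α] (m : ℕ) : ℕ :=
  ∑ l ∈ SW α m, ∑ l' ∈ SW α m, (l.length - csuf l l')

@[simp] lemma Pn_zero : Pn α 0 = 1 := rfl
@[simp] lemma Ln_zero : Ln α 0 = 0 := rfl
@[simp] lemma Cn_zero : Cn α 0 = 0 := by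
  simp [Cn, SW, lcp]

lemma Pn_succ (m : ℕ) : Pn α (m + 1) = 1 + Fintype.card α * Pn α m := by
  unfold Pn
  rw [Finset.card_eq_sum_ones, sum_SW_succ]
  simp [Finset.sum_const, Finset.card_univ]

lemma Ln_succ (m : ℕ) :
    Ln α (m + 1) = Fintype.card α * (Pn α m + Ln α m) := by
  unfold Ln
  rw [sum_SW_succ]
  have h : ∀ a : α, ∑ l ∈ SW α m, (a :: l).length = Pn α m + Ln α m := by
    intro a
    simp [List.length_cons, Finset.sum_add_distrib, Finset.sum_const, Pn, Ln, add_comm]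
  rw [Finset.sum_congr rfl fun a _ => h a]
  simp [Finset.sum_const, Finset.card_univ, Ln, Pn]

lemma Cn_succ (m : ℕ) :
    Cn α (m + 1) = Fintype.card α * (Pn α m * Pn α m + Cn α m) := by
  unfold Cn
  rw [sum_SW_succ]
  have h0 : ∑ l' ∈ SW α (m + 1), lcp ([] : List α) l' = 0 :=
    Finset.sum_eq_zero fun _ _ => lcp_nil_left _
  rw [h0, zero_add]
  have key : ∀ a : α, ∀ l ∈ SW α m,
      ∑ l' ∈ SW α (m + 1), lcp (a :: l) l'
        = Pn α m + ∑ l' ∈ SW α m, lcp l l' := by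
    intro a l _
    rw [sum_SW_succ]
    rw [lcp_nil_right, zero_add]
    have hred : ∀ (b : α) (l' : List α),
        lcp (a :: l) (b :: l') = if a = b then lcp l l' + 1 else 0 := fun _ _ => rfl
    simp_rw [hred]
    rw [Finset.sum_comm]
    simp [Finset.sum_ite_eq, Finset.sum_add_distrib, Finset.sum_const, Pn, add_comm]
  calc ∑ a : α, ∑ l ∈ SW α m, ∑ l' ∈ SW α (m+1), lcp (a :: l) l'
      = ∑ a : α, ∑ l ∈ SW α m, (Pn α m + ∑ l' ∈ SW α m, lcp l l') := by
        refine Finset.sum_congr rfl fun a _ => Finset.sum_congr rfl fun l hl => key a l hl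
    _ = Fintype.card α * (Pn α m * Pn α m + Cn α m) := by
        simp only [Finset.sum_add_distrib, Finset.sum_const, smul_eq_mul, Finset.card_univ]
        rw [← mul_add]
        rfl

lemma sum_SW_reverse {M : Type*} [AddCommMonoid M] (m : ℕ) (f : List α → M) :
    ∑ l ∈ SW α m, f l = ∑ l ∈ SW α m, f l.reverse := by
  refine Finset.sum_nbij' (fun l => l.reverse) (fun l => l.reverse) ?_ ?_ ?_ ?_ ?_ <;>
    simp [mem_SW]

lemma csuf_sum_eq (m : ℕ) :
    ∑ l ∈ SW α m, ∑ l' ∈ SW α m, csuf l l' = Cn α m := by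
  unfold Cn
  calc ∑ l ∈ SW α m, ∑ l' ∈ SW α m, csuf l l'
      = ∑ l ∈ SW α m, ∑ l' ∈ SW α m, csuf l.reverse l'.reverse := by
        rw [sum_SW_reverse m (fun l => ∑ l' ∈ SW α m, csuf l l')]
        exact Finset.sum_congr rfl fun l _ =>
          sum_SW_reverse m (fun l' => csuf l.reverse l')
    _ = ∑ l ∈ SW α m, ∑ l' ∈ SW α m, lcp l l' := by
        simp [csuf]

lemma Fn_cast (m : ℕ) :
    (Fn α m : ℚ) = (Pn α m : ℚ) * (Ln α m : ℚ) - (Cn α m : ℚ) := by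
  have h1 : (Fn α m : ℚ)
      = ∑ l ∈ SW α m, ∑ l' ∈ SW α m, ((l.length : ℚ) - (csuf l l' : ℚ)) := by
    unfold Fn
    push_cast
    exact Finset.sum_congr rfl fun l _ => Finset.sum_congr rfl
      fun l' _ => Nat.cast_sub (csuf_le_left l l')
  rw [h1]
  have h2 : ∀ l ∈ SW α m, ∑ l' ∈ SW α m, ((l.length : ℚ) - (csuf l l' : ℚ))
      = (Pn α m : ℚ) * (l.length : ℚ) - ∑ l' ∈ SW α m, (csuf l l' : ℚ) := by
    intro l _
    rw [Finset.sum_sub_distrib, Finset.sum_const]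
    simp [Pn, mul_comm]
  rw [Finset.sum_congr rfl h2, Finset.sum_sub_distrib]
  congr 1
  · rw [← Finset.mul_sum]
    unfold Ln
    push_cast
    rfl
  · rw [← csuf_sum_eq]
    push_cast
    rfl

lemma wdist_eq {α : Type*} [DecidableEq α] (l l' : List α) :
    wdist l l' = (l.length - csuf l l') + (l'.length - csuf l l') := rfl

lemma Ln_def (α : Type*) [DecidableEq α] [Fintype α] (m : ℕ) :
    Ln α m = ∑ l ∈ SW α m, l.length := rfl

lemma Fn_def (α : Type*) [DecidableEq α] [Fintype α] (m : ℕ) :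
    Fn α m = ∑ l ∈ SW α m, ∑ l' ∈ SW α m, (l.length - csuf l l') := rfl

lemma P_closed (m : ℕ) :
    ((Fintype.card α : ℚ) - 1) * (Pn α m : ℚ) = (Fintype.card α : ℚ) ^ (m + 1) - 1 := by
  set K : ℚ := (Fintype.card α : ℚ)
  induction m with
  | zero => rw [Pn_zero]; push_cast; ring
  | succ m ih =>
    have hr : (Pn α (m + 1) : ℚ) = 1 + K * (Pn α m : ℚ) := by
      rw [Pn_succ]; push_cast; ring
    rw [hr]
    linear_combination K * ih

lemma L_closed (m : ℕ) :
    ((Fintype.card α : ℚ) - 1) ^ 2 * (Ln α m : ℚ)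
      = m * (Fintype.card α : ℚ) ^ (m + 2) - (m + 1) * (Fintype.card α : ℚ) ^ (m + 1)
        + (Fintype.card α : ℚ) := by
  set K : ℚ := (Fintype.card α : ℚ)
  induction m with
  | zero => rw [Ln_zero]; push_cast; ring
  | succ m ih =>
    have hr : (Ln α (m + 1) : ℚ) = K * ((Pn α m : ℚ) + (Ln α m : ℚ)) := by
      rw [Ln_succ]; push_cast; ring
    rw [hr]
    push_cast
    linear_combination K * (K - 1) * P_closed (α := α) m + K * ih

lemma C_closed (m : ℕ) :
    ((Fintype.card α : ℚ) - 1) ^ 3 * (Cn α m : ℚ)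
      = (Fintype.card α : ℚ) ^ (m + 2) * ((Fintype.card α : ℚ) ^ m - 1)
        - 2 * m * (Fintype.card α : ℚ) ^ (m + 1) * ((Fintype.card α : ℚ) - 1)
        + (Fintype.card α : ℚ) * ((Fintype.card α : ℚ) ^ m - 1) := by
  set K : ℚ := (Fintype.card α : ℚ)
  induction m with
  | zero => rw [Cn_zero]; push_cast; ring
  | succ m ih =>
    have hr : (Cn α (m + 1) : ℚ)
        = K * ((Pn α m : ℚ) * (Pn α m : ℚ) + (Cn α m : ℚ)) := by
      rw [Cn_succ]; push_cast; ring
    rw [hr]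
    push_cast
    linear_combination
      (K * (K - 1) * ((K - 1) * (Pn α m : ℚ) + (K ^ (m + 1) - 1))) * P_closed (α := α) m + K * ih

lemma sum_ite_fin {n : ℕ} (i : Fin n) (a b : ℕ) :
    ∑ j : Fin n, (if i = j then a else b) = a + (n - 1) * b := by
  classical
  rw [← Finset.sum_erase_add _ _ (Finset.mem_univ i)]
  rw [if_pos rfl]
  rw [Finset.sum_congr rfl (fun j hj => if_neg (Ne.symm (Finset.mem_erase.mp hj).1))]
  rw [Finset.sum_const, smul_eq_mul]
  rw [Finset.card_erase_of_mem (Finset.mem_univ i), Finset.card_univ, Fintype.card_fin]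
  ring

lemma sum_wdist (n t : ℕ) :
    ∑ l ∈ SW (Fin (n - 1)) (t - 1), ∑ s ∈ SW (Fin (n - 1)) (t - 1), wdist l s
      = 2 * Fn (Fin (n - 1)) (t - 1) := by
  have h : ∀ l ∈ SW (Fin (n-1)) (t-1), ∀ s ∈ SW (Fin (n-1)) (t-1),
      wdist l s = (l.length - csuf l s) + (s.length - csuf l s) :=
    fun l _ s _ => wdist_eq l s
  calc ∑ l ∈ SW (Fin (n-1)) (t-1), ∑ s ∈ SW (Fin (n-1)) (t-1), wdist l s
      = ∑ l ∈ SW (Fin (n-1)) (t-1), ∑ s ∈ SW (Fin (n-1)) (t-1),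
          ((l.length - csuf l s) + (s.length - csuf l s)) := by
        exact Finset.sum_congr rfl fun l hl => Finset.sum_congr rfl fun s hs => h l hl s hs
    _ = Fn (Fin (n-1)) (t-1) + ∑ l ∈ SW (Fin (n-1)) (t-1), ∑ s ∈ SW (Fin (n-1)) (t-1),
          (s.length - csuf l s) := by
        rw [Fn_def]
        simp [Finset.sum_add_distrib]
    _ = 2 * Fn (Fin (n-1)) (t-1) := by
        rw [Finset.sum_comm]
        simp_rw [fun l s => csuf_comm s l]
        rw [← Fn_def]
        ring

set_option maxHeartbeats 1000000 in
lemma main_count (n t : ℕ) :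
    letI instW : Fintype {l : List (Fin (n - 1)) // l.length ≤ t - 1} :=
      Fintype.subtype (SW (Fin (n - 1)) (t - 1)) (fun l => mem_SW (t - 1) l)
    (∑ u : Unit ⊕ (Fin n × {l : List (Fin (n - 1)) // l.length ≤ t - 1}),
      ∑ v : Unit ⊕ (Fin n × {l : List (Fin (n - 1)) // l.length ≤ t - 1}),
        dd (n := n) (t := t) u v)
      = 2 * (n * (Pn (Fin (n - 1)) (t - 1) + Ln (Fin (n - 1)) (t - 1))
          + n * (n - 1) * (Pn (Fin (n - 1)) (t - 1) * Pn (Fin (n - 1)) (t - 1)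
              + Pn (Fin (n - 1)) (t - 1) * Ln (Fin (n - 1)) (t - 1))
          + n * Fn (Fin (n - 1)) (t - 1)) := by
  letI instW : Fintype {l : List (Fin (n - 1)) // l.length ≤ t - 1} :=
    Fintype.subtype (SW (Fin (n - 1)) (t - 1)) (fun l => mem_SW (t - 1) l)
  set P := Pn (Fin (n - 1)) (t - 1) with hP
  set L := Ln (Fin (n - 1)) (t - 1) with hL
  set F := Fn (Fin (n - 1)) (t - 1) with hF
  rw [Fintype.sum_sum_type]
  simp only [Fintype.sum_sum_type]
  simp only [Fintype.sum_prod_type]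
  simp only [Fintype.sum_unique]
  simp only [dd]
  -- scalar conversions
  have hcardW : Fintype.card {l : List (Fin (n - 1)) // l.length ≤ t - 1} = P := by
    rw [hP]
    exact Fintype.card_of_subtype _ (fun l => mem_SW (t - 1) l)
  have hone : (∑ _x : {l : List (Fin (n - 1)) // l.length ≤ t - 1}, 1) = P := by
    rw [Finset.sum_const, Finset.card_univ, hcardW, smul_eq_mul, mul_one]
  have hLt : (∑ x : {l : List (Fin (n - 1)) // l.length ≤ t - 1}, x.1.length) = L := by
    rw [hL, Ln_def]
    exact (Finset.sum_subtype _ (fun l => mem_SW (t - 1) l) _).symm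
  have hFt : (∑ x1 : {l : List (Fin (n - 1)) // l.length ≤ t - 1},
      ∑ x3 : {l : List (Fin (n - 1)) // l.length ≤ t - 1}, wdist x1.1 x3.1) = 2 * F := by
    rw [hF]
    have step1 : ∀ x1 : {l : List (Fin (n - 1)) // l.length ≤ t - 1},
        (∑ x3 : {l : List (Fin (n - 1)) // l.length ≤ t - 1}, wdist x1.1 x3.1)
          = ∑ s ∈ SW (Fin (n - 1)) (t - 1), wdist x1.1 s :=
      fun x1 => (Finset.sum_subtype (SW (Fin (n - 1)) (t - 1))
        (fun l => mem_SW (t - 1) l) (fun s => wdist x1.1 s)).symm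
    rw [Finset.sum_congr rfl fun x1 _ => step1 x1]
    rw [show (∑ x1 : {l : List (Fin (n - 1)) // l.length ≤ t - 1},
        ∑ s ∈ SW (Fin (n - 1)) (t - 1), wdist x1.1 s)
          = ∑ l ∈ SW (Fin (n - 1)) (t - 1), ∑ s ∈ SW (Fin (n - 1)) (t - 1), wdist l s from
      (Finset.sum_subtype (SW (Fin (n - 1)) (t - 1)) (fun l => mem_SW (t - 1) l)
        (fun l => ∑ s ∈ SW (Fin (n - 1)) (t - 1), wdist l s)).symm]
    exact sum_wdist n t
  have hb : (∑ x : {l : List (Fin (n - 1)) // l.length ≤ t - 1}, (1 + x.1.length)) = P + L := by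
    rw [Finset.sum_add_distrib, hone, hLt]
  have inner : ∀ (i : Fin n) (x1 : {l : List (Fin (n - 1)) // l.length ≤ t - 1}),
      (∑ x2 : Fin n, ∑ x3 : {l : List (Fin (n - 1)) // l.length ≤ t - 1},
          if i = x2 then wdist x1.1 x3.1 else 1 + x1.1.length + (1 + x3.1.length))
        = (∑ x3 : {l : List (Fin (n - 1)) // l.length ≤ t - 1}, wdist x1.1 x3.1)
            + (n - 1) * ((2 + x1.1.length) * P + L) := by
    intro i x1
    rw [Finset.sum_comm]
    rw [Finset.sum_congr rfl fun x3 _ => sum_ite_fin i (wdist x1.1 x3.1)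
      (1 + x1.1.length + (1 + x3.1.length))]
    rw [Finset.sum_add_distrib]
    congr 1
    rw [← Finset.mul_sum]
    congr 1
    have h2 : ∀ x3 : {l : List (Fin (n - 1)) // l.length ≤ t - 1},
        1 + x1.1.length + (1 + x3.1.length) = (2 + x1.1.length) + x3.1.length :=
      fun x3 => by omega
    rw [Finset.sum_congr rfl fun x3 _ => h2 x3, Finset.sum_add_distrib, Finset.sum_const,
      Finset.card_univ, hcardW, smul_eq_mul, hLt, mul_comm]
  rw [Finset.sum_congr rfl fun (i : Fin n) (_ : i ∈ Finset.univ) =>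
    Finset.sum_congr rfl fun (x1 : {l : List (Fin (n - 1)) // l.length ≤ t - 1})
      (_ : x1 ∈ Finset.univ) =>
        congrArg (fun z => 1 + x1.1.length + z) (inner i x1)]
  -- now collapse everything
  have hrow : ∀ i : Fin n, (∑ x1 : {l : List (Fin (n - 1)) // l.length ≤ t - 1},
      (1 + x1.1.length + ((∑ x3 : {l : List (Fin (n - 1)) // l.length ≤ t - 1},
          wdist x1.1 x3.1) + (n - 1) * ((2 + x1.1.length) * P + L))))
        = (P + L) + (2 * F + (n - 1) * ((2 * P + L) * P + P * L)) := by
    intro i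
    rw [Finset.sum_add_distrib, hb, Finset.sum_add_distrib, hFt, ← Finset.mul_sum]
    congr 3
    have h3 : ∀ x1 : {l : List (Fin (n - 1)) // l.length ≤ t - 1},
        (2 + x1.1.length) * P + L = (2 * P + x1.1.length * P) + L := fun x1 => by ring
    rw [Finset.sum_congr rfl fun x1 _ => h3 x1, Finset.sum_add_distrib,
      Finset.sum_add_distrib, Finset.sum_const, Finset.card_univ, hcardW,
      ← Finset.sum_mul, hLt, Finset.sum_const, Finset.card_univ, hcardW]
    ring
  rw [Finset.sum_congr rfl fun i (_ : i ∈ Finset.univ) => hrow i]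
  rw [Finset.sum_congr rfl fun (i : Fin n) (_ : i ∈ Finset.univ) => hb]
  rw [Finset.sum_const, Finset.sum_const, Finset.card_univ, Fintype.card_fin,
    smul_eq_mul, smul_eq_mul]
  ring

end CayleyAux

set_option maxHeartbeats 2000000 in
open CayleyAux in
/-- For `n ≥ 3` and `t ≥ 1`, the Wiener index of the Cayley tree `C(t,n)` equals
`n(n−1)^{t−1} + (n(t−1)(n−1)^{t+1} − n(n−1)^{t−1} + n)/(n−2)²
 + (n((n−2)t − n)(n−1)^{2t} + 2n(n−1)^{t+1})/(n−2)³
 + (n(n−1)/(n−2)³)·(((n−2)t − 1)(n−1)^{2t} − ((n−2)t − 2)(n−1)^t − 1)`. -/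
theorem wiener_cayleyTree (n t : ℕ) (hn : 3 ≤ n) (ht : 1 ≤ t) :
    (wienerIndex (cayleyTree n t) : ℚ) =
      (n : ℚ) * ((n : ℚ) - 1) ^ (t - 1)
        + ((n : ℚ) * ((t : ℚ) - 1) * ((n : ℚ) - 1) ^ (t + 1)
            - (n : ℚ) * ((n : ℚ) - 1) ^ (t - 1) + (n : ℚ)) / ((n : ℚ) - 2) ^ 2
        + ((n : ℚ) * (((n : ℚ) - 2) * t - (n : ℚ)) * ((n : ℚ) - 1) ^ (2 * t)
            + 2 * (n : ℚ) * ((n : ℚ) - 1) ^ (t + 1)) / ((n : ℚ) - 2) ^ 3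
        + ((n : ℚ) * ((n : ℚ) - 1) / ((n : ℚ) - 2) ^ 3) *
            ((((n : ℚ) - 2) * t - 1) * ((n : ℚ) - 1) ^ (2 * t)
              - (((n : ℚ) - 2) * t - 2) * ((n : ℚ) - 1) ^ t - 1) := by
  -- Step 1: Wiener index as an explicit natural number
  have hW : wienerIndex (cayleyTree n t)
      = n * (Pn (Fin (n - 1)) (t - 1) + Ln (Fin (n - 1)) (t - 1))
          + n * (n - 1) * (Pn (Fin (n - 1)) (t - 1) * Pn (Fin (n - 1)) (t - 1)
              + Pn (Fin (n - 1)) (t - 1) * Ln (Fin (n - 1)) (t - 1))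
          + n * Fn (Fin (n - 1)) (t - 1) := by
    unfold wienerIndex
    letI instW : Fintype {l : List (Fin (n - 1)) // l.length ≤ t - 1} :=
      Fintype.subtype (SW (Fin (n - 1)) (t - 1)) (fun l => mem_SW (t - 1) l)
    letI instV : Fintype (CayleyVertex n t) :=
      inferInstanceAs (Fintype (Unit ⊕ (Fin n × {l : List (Fin (n - 1)) // l.length ≤ t - 1})))
    rw [Subsingleton.elim (Fintype.ofFinite (CayleyVertex n t)) instV]
    have hdd : (∑ u : CayleyVertex n t, ∑ v : CayleyVertex n t, (cayleyTree n t).dist u v)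
        = ∑ u : CayleyVertex n t, ∑ v : CayleyVertex n t, dd (n := n) (t := t) u v :=
      Finset.sum_congr rfl fun u _ => Finset.sum_congr rfl fun v _ => dist_eq_dd u v
    rw [hdd]
    have e : (∑ u : CayleyVertex n t, ∑ v : CayleyVertex n t, dd (n := n) (t := t) u v)
        = 2 * (n * (Pn (Fin (n - 1)) (t - 1) + Ln (Fin (n - 1)) (t - 1))
          + n * (n - 1) * (Pn (Fin (n - 1)) (t - 1) * Pn (Fin (n - 1)) (t - 1)
              + Pn (Fin (n - 1)) (t - 1) * Ln (Fin (n - 1)) (t - 1))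
          + n * Fn (Fin (n - 1)) (t - 1)) := main_count n t
    rw [e]
    omega
  -- Step 2: rational arithmetic
  rw [hW]
  obtain ⟨m, rfl⟩ : ∃ m, t = m + 1 := ⟨t - 1, by omega⟩
  simp only [Nat.add_sub_cancel]
  set K : ℚ := ((n - 1 : ℕ) : ℚ) with hKdef
  have hcard : (Fintype.card (Fin (n - 1)) : ℚ) = K := by rw [Fintype.card_fin]
  have hK2 : K = (n : ℚ) - 1 := by
    rw [hKdef]; push_cast [Nat.cast_sub (by omega : 1 ≤ n)]; ring
  have hKne : K - 1 ≠ 0 := by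
    rw [hK2]
    have : (3 : ℚ) ≤ (n : ℚ) := by exact_mod_cast hn
    intro h; nlinarith
  have hPc := P_closed (α := Fin (n - 1)) m
  have hLc := L_closed (α := Fin (n - 1)) m
  have hCc := C_closed (α := Fin (n - 1)) m
  rw [hcard] at hPc hLc hCc
  have hP : (Pn (Fin (n - 1)) m : ℚ) = (K ^ (m + 1) - 1) / (K - 1) := by
    rw [eq_div_iff hKne]; linear_combination hPc
  have hL : (Ln (Fin (n - 1)) m : ℚ)
      = (m * K ^ (m + 2) - (m + 1) * K ^ (m + 1) + K) / (K - 1) ^ 2 := by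
    rw [eq_div_iff (pow_ne_zero 2 hKne)]; linear_combination hLc
  have hC : (Cn (Fin (n - 1)) m : ℚ)
      = (K ^ (m + 2) * (K ^ m - 1) - 2 * m * K ^ (m + 1) * (K - 1)
          + K * (K ^ m - 1)) / (K - 1) ^ 3 := by
    rw [eq_div_iff (pow_ne_zero 3 hKne)]; linear_combination hCc
  have hnK : (n : ℚ) = K + 1 := by rw [hK2]; ring
  have hn1 : ((n - 1 : ℕ) : ℚ) = K := rfl
  have e2t : 2 * (m + 1) = 2 * m + 2 := by ring
  push_cast [hn1, Fn_cast]
  have hsub2 : (n : ℚ) - 2 = K - 1 := by rw [hnK]; ring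
  have hsub1 : (n : ℚ) - 1 = K := by rw [hnK]; ring
  rw [hP, hL, hC, e2t, hsub2, hsub1, hnK]
  field_simp
  ring
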